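/- Let H₀ and V be n×n complex matrices, set H := H₀ + V, and for s ∈ ℝ let τ_s(V) := exp(isH₀) · V · exp(−isH₀). For t ∈ ℝ and n ≥ 1 define the iterated Bochner integral I_n(t) := ∫₀ᵗ dt₁ ∫₀^{t₁} dt₂ ⋯ ∫₀^{t_{n−1}} dt_n τ_{t_n}(V)⋯τ_{t₁}(V), and set I_0(t) := 1. Then the series Σ_{n=0}^∞ iⁿ · I_n(t) converges (HasSum) and its sum equals exp(itH) · exp(−itH₀); equivalently, exp(itH) = (Σ_{n=0}^∞ iⁿ I_n(t)) · exp(itH₀) (norm-convergent Dyson–Phillips series). -/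

import Mathlib

open scoped Matrix.Norms.L2Operator
open NormedSpace MeasureTheory Filter Nat Topology

/-- The interaction-picture evolution `τ_s(V) = e^{isH₀} V e^{-isH₀}`. -/
noncomputable def interactionPicture {n : Type*} [Fintype n] [DecidableEq n]
    (H₀ V : Matrix n n ℂ) (s : ℝ) : Matrix n n ℂ :=
  NormedSpace.exp ((Complex.I * (s : ℂ)) • H₀) * V *
    NormedSpace.exp ((-(Complex.I * (s : ℂ))) • H₀)

/-- The `n`-th iterated Dyson integral
`I_n(t) = ∫₀ᵗ dt₁ ∫₀^{t₁} dt₂ ⋯ ∫₀^{t_{n-1}} dt_n τ_{t_n}(V)⋯τ_{t₁}(V)`,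
with the factor carrying the largest time `t₁` rightmost, and `I_0(t) = 1`. -/
noncomputable def dysonIter {n : Type*} [Fintype n] [DecidableEq n]
    (H₀ V : Matrix n n ℂ) : ℕ → ℝ → Matrix n n ℂ
  | 0, _ => 1
  | m + 1, t => ∫ s in (0:ℝ)..t, dysonIter H₀ V m s * interactionPicture H₀ V s

namespace DysonPhillipsAux

/-- `|∫₀ˢ |u|^m du| = |s|^(m+1)/(m+1)`. -/
lemma abs_integral_abs_pow (m : ℕ) (s : ℝ) :
    |∫ u in (0:ℝ)..s, |u| ^ m| = |s| ^ (m + 1) / (m + 1) := by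
  rcases le_or_gt 0 s with hs | hs
  · rw [intervalIntegral.integral_congr (g := fun u : ℝ => u ^ m) ?_, integral_pow]
    · rw [zero_pow (Nat.succ_ne_zero m), sub_zero, abs_div, abs_pow,
        abs_of_nonneg (by positivity : (0:ℝ) ≤ (m:ℝ) + 1)]
    · intro u hu
      rw [Set.uIcc_of_le hs] at hu
      simp [abs_of_nonneg hu.1]
  · rw [intervalIntegral.integral_congr (g := fun u : ℝ => (-u) ^ m) ?_]
    · have h2 : (∫ u in (0:ℝ)..s, (-u) ^ m) = ∫ u in (-s)..(0:ℝ), u ^ m := by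
        simpa using intervalIntegral.integral_comp_neg (a := (0:ℝ)) (b := s)
          (fun u : ℝ => u ^ m)
      rw [h2, integral_pow, zero_pow (Nat.succ_ne_zero m), zero_sub, abs_div, abs_neg,
        abs_pow, abs_neg, abs_of_nonneg (by positivity : (0:ℝ) ≤ (m:ℝ) + 1)]
    · intro u hu
      rw [Set.uIcc_of_ge hs.le] at hu
      simp [abs_of_nonpos hu.2]

variable {n : Type*} [Fintype n] [DecidableEq n]

noncomputable instance instNormedAlgebraRatMatrix : NormedAlgebra ℚ (Matrix n n ℂ) :=
  NormedAlgebra.restrictScalars ℚ ℂ (Matrix n n ℂ)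

lemma continuous_tau (H₀ V : Matrix n n ℂ) : Continuous (interactionPicture H₀ V) := by
  unfold interactionPicture
  have h1 : Continuous fun s : ℝ => NormedSpace.exp ((Complex.I * (s : ℂ)) • H₀) :=
    NormedSpace.exp_continuous.comp
      ((continuous_const.mul Complex.continuous_ofReal).smul continuous_const)
  have h2 : Continuous fun s : ℝ => NormedSpace.exp ((-(Complex.I * (s : ℂ))) • H₀) :=
    NormedSpace.exp_continuous.comp
      (((continuous_const.mul Complex.continuous_ofReal)).neg.smul continuous_const)
  exact (h1.mul continuous_const).mul h2

lemma continuous_dysonIter (H₀ V : Matrix n n ℂ) : ∀ m, Continuous (dysonIter H₀ V m)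
  | 0 => continuous_const
  | m + 1 => by
      have h := (continuous_dysonIter H₀ V m).mul (continuous_tau H₀ V)
      exact intervalIntegral.continuous_primitive (fun a b => h.intervalIntegrable a b) 0

/-- `exp(-z•H) * exp(z•H) = 1`. -/
lemma exp_neg_mul_exp_smul (H : Matrix n n ℂ) (z : ℂ) :
    NormedSpace.exp ((-z) • H) * NormedSpace.exp (z • H) = 1 := by
  rw [← NormedSpace.exp_add_of_commute (((Commute.refl H).smul_left (-z)).smul_right z)]
  rw [← add_smul]
  simp

/-- Derivative of `s ↦ exp((c s) • H)`. -/
lemma hasDerivAt_expc (H : Matrix n n ℂ) (c : ℂ) (u : ℝ) :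
    HasDerivAt (fun s : ℝ => NormedSpace.exp ((c * (s : ℂ)) • H))
      (c • (NormedSpace.exp ((c * (u : ℂ)) • H) * H)) u := by
  have h2 : HasDerivAt (fun s : ℝ => c * (s : ℂ)) c u := by
    simpa using (Complex.ofRealCLM.hasDerivAt (x := u)).const_mul c
  exact (hasDerivAt_exp_smul_const H (c * (u : ℂ))).scomp u h2

/-- The comparison evolution `W(t) = exp(itH) exp(-itH₀)`. -/
noncomputable def Wfun (H₀ V : Matrix n n ℂ) (u : ℝ) : Matrix n n ℂ :=
  NormedSpace.exp ((Complex.I * (u : ℂ)) • (H₀ + V)) *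
    NormedSpace.exp ((-(Complex.I * (u : ℂ))) • H₀)

lemma hasDerivAt_W (H₀ V : Matrix n n ℂ) (u : ℝ) :
    HasDerivAt (Wfun H₀ V)
      (Complex.I • (Wfun H₀ V u * interactionPicture H₀ V u)) u := by
  set H := H₀ + V with hH
  set E₁ := NormedSpace.exp ((Complex.I * (u : ℂ)) • H) with hE₁
  set E₂ := NormedSpace.exp ((-(Complex.I * (u : ℂ))) • H₀) with hE₂
  set E₃ := NormedSpace.exp ((Complex.I * (u : ℂ)) • H₀) with hE₃
  have hA := hasDerivAt_expc H Complex.I u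
  have hB : HasDerivAt (fun s : ℝ => NormedSpace.exp ((-(Complex.I * (s : ℂ))) • H₀))
      ((-Complex.I) • (E₂ * H₀)) u := by
    have := hasDerivAt_expc H₀ (-Complex.I) u
    simp only [neg_mul] at this
    simpa [hE₂, neg_mul] using this
  have hm := hA.mul hB
  have h23 : E₂ * E₃ = 1 := exp_neg_mul_exp_smul H₀ (Complex.I * u)
  have hc : E₂ * H₀ = H₀ * E₂ :=
    (((Commute.refl H₀).smul_left (-(Complex.I * (u : ℂ)))).exp_left).eq
  have key : (Complex.I • (E₁ * H)) * E₂ + E₁ * ((-Complex.I) • (E₂ * H₀))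
      = Complex.I • (Wfun H₀ V u * interactionPicture H₀ V u) := by
    have hW : Wfun H₀ V u = E₁ * E₂ := rfl
    have hτ : interactionPicture H₀ V u = E₃ * V * E₂ := rfl
    rw [hW, hτ, smul_mul_assoc, mul_smul_comm, neg_smul, ← sub_eq_add_neg, ← smul_sub]
    congr 1
    have h1 : E₁ * E₂ * (E₃ * V * E₂) = E₁ * (E₂ * E₃) * (V * E₂) := by noncomm_ring
    rw [hc, h1, h23, mul_one, hH]
    noncomm_ring
  have : HasDerivAt (Wfun H₀ V)
      ((Complex.I • (E₁ * H)) * E₂ + E₁ * ((-Complex.I) • (E₂ * H₀))) u := hm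
  rwa [key] at this

lemma continuous_W (H₀ V : Matrix n n ℂ) : Continuous (Wfun H₀ V) :=
  continuous_iff_continuousAt.2 fun u => (hasDerivAt_W H₀ V u).continuousAt

lemma W_eq (H₀ V : Matrix n n ℂ) (u : ℝ) :
    Wfun H₀ V u
      = 1 + ∫ s in (0:ℝ)..u, Complex.I • (Wfun H₀ V s * interactionPicture H₀ V s) := by
  have hint : Continuous fun s => Complex.I • (Wfun H₀ V s * interactionPicture H₀ V s) :=
    ((continuous_W H₀ V).mul (continuous_tau H₀ V)).const_smul Complex.I
  have hftc := intervalIntegral.integral_eq_sub_of_hasDerivAt (a := (0:ℝ)) (b := u)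
    (f := Wfun H₀ V) (fun x _ => hasDerivAt_W H₀ V x) (hint.intervalIntegrable _ _)
  have hW0 : Wfun H₀ V 0 = 1 := by simp [Wfun]
  rw [hftc, hW0]
  abel

/-- Partial sums of the Dyson series. -/
noncomputable def P (H₀ V : Matrix n n ℂ) (N : ℕ) (u : ℝ) : Matrix n n ℂ :=
  ∑ m ∈ Finset.range N, (Complex.I ^ m) • dysonIter H₀ V m u

lemma continuous_P (H₀ V : Matrix n n ℂ) (N : ℕ) : Continuous (P H₀ V N) :=
  continuous_finset_sum _ fun m _ => (continuous_dysonIter H₀ V m).const_smul (Complex.I ^ m)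

lemma P_succ (H₀ V : Matrix n n ℂ) (N : ℕ) (u : ℝ) :
    P H₀ V (N + 1) u
      = 1 + ∫ s in (0:ℝ)..u, Complex.I • (P H₀ V N s * interactionPicture H₀ V s) := by
  rw [P, Finset.sum_range_succ']
  have h0 : (Complex.I ^ 0) • dysonIter H₀ V 0 u = 1 := by simp [dysonIter]
  rw [h0, add_comm]
  congr 1
  have hterm : ∀ m, (Complex.I ^ (m + 1)) • dysonIter H₀ V (m + 1) u
      = ∫ s in (0:ℝ)..u,
          (Complex.I ^ (m + 1)) • (dysonIter H₀ V m s * interactionPicture H₀ V s) := by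
    intro m
    rw [show dysonIter H₀ V (m + 1) u
        = ∫ s in (0:ℝ)..u, dysonIter H₀ V m s * interactionPicture H₀ V s from rfl,
      ← intervalIntegral.integral_smul]
  calc (∑ m ∈ Finset.range N, (Complex.I ^ (m + 1)) • dysonIter H₀ V (m + 1) u)
      = ∑ m ∈ Finset.range N, ∫ s in (0:ℝ)..u,
          (Complex.I ^ (m + 1)) • (dysonIter H₀ V m s * interactionPicture H₀ V s) := by
        exact Finset.sum_congr rfl fun m _ => hterm m
    _ = ∫ s in (0:ℝ)..u, ∑ m ∈ Finset.range N,
          (Complex.I ^ (m + 1)) • (dysonIter H₀ V m s * interactionPicture H₀ V s) := by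
        rw [← intervalIntegral.integral_finset_sum]
        intro m _
        exact (((continuous_dysonIter H₀ V m).mul (continuous_tau H₀ V)).const_smul
          (Complex.I ^ (m + 1))).intervalIntegrable _ _
    _ = ∫ s in (0:ℝ)..u, Complex.I • (P H₀ V N s * interactionPicture H₀ V s) := by
        congr 1
        funext s
        rw [P, Finset.sum_mul, Finset.smul_sum]
        refine Finset.sum_congr rfl fun m _ => ?_
        rw [smul_mul_assoc, smul_smul]
        congr 1
        ring

/-- Core Grönwall-type iterated bound. -/
lemma key_bound {f : ℕ → ℝ → Matrix n n ℂ} {τ : ℝ → Matrix n n ℂ} {t M C : ℝ}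
    (hτc : Continuous τ) (hfc : ∀ N, Continuous (f N))
    (hrec : ∀ N u, f (N + 1) u = ∫ s in (0:ℝ)..u, Complex.I • (f N s * τ s))
    (hM : ∀ u ∈ Set.uIcc (0:ℝ) t, ‖f 0 u‖ ≤ M)
    (hC : ∀ u ∈ Set.uIcc (0:ℝ) t, ‖τ u‖ ≤ C) :
    ∀ N, ∀ u ∈ Set.uIcc (0:ℝ) t, ‖f N u‖ ≤ M * (C ^ N * |u| ^ N / N !) := by
  have hC0 : 0 ≤ C := le_trans (norm_nonneg _) (hC 0 Set.left_mem_uIcc)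
  intro N
  induction N with
  | zero => intro u hu; simpa using hM u hu
  | succ N ih =>
    intro u hu
    have hsub : Set.uIoc (0:ℝ) u ⊆ Set.uIcc (0:ℝ) t :=
      le_trans Set.uIoc_subset_uIcc (Set.uIcc_subset_uIcc Set.left_mem_uIcc hu)
    rw [hrec]
    have hbound : ∀ᵐ s ∂(volume.restrict (Set.uIoc (0:ℝ) u)),
        ‖Complex.I • (f N s * τ s)‖ ≤ (M * C ^ (N + 1) / N !) * |s| ^ N := by
      refine ae_restrict_of_forall_mem measurableSet_uIoc fun s hs => ?_
      have hs' := hsub hs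
      have h1 : ‖Complex.I • (f N s * τ s)‖ = ‖f N s * τ s‖ := by
        rw [norm_smul, Complex.norm_I, one_mul]
      rw [h1]
      calc ‖f N s * τ s‖ ≤ ‖f N s‖ * ‖τ s‖ := norm_mul_le _ _
        _ ≤ (M * (C ^ N * |s| ^ N / N !)) * C := by
            apply mul_le_mul (ih s hs') (hC s hs') (norm_nonneg _)
            have hM0 : 0 ≤ M := le_trans (norm_nonneg _) (hM 0 Set.left_mem_uIcc)
            positivity
        _ = (M * C ^ (N + 1) / N !) * |s| ^ N := by ring
    have hInt : IntervalIntegrable (fun s => (M * C ^ (N + 1) / N !) * |s| ^ N)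
        volume 0 u := by
      apply Continuous.intervalIntegrable
      exact (continuous_const.mul ((continuous_abs).pow N))
    calc ‖∫ s in (0:ℝ)..u, Complex.I • (f N s * τ s)‖
        ≤ |∫ s in (0:ℝ)..u, (M * C ^ (N + 1) / N !) * |s| ^ N| :=
          intervalIntegral.norm_integral_le_abs_of_norm_le hbound hInt
      _ = |M * C ^ (N + 1) / N !| * |∫ s in (0:ℝ)..u, |s| ^ N| := by
          rw [intervalIntegral.integral_const_mul, abs_mul]
      _ = |M * C ^ (N + 1) / N !| * (|u| ^ (N + 1) / (N + 1)) := by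
          rw [abs_integral_abs_pow]
      _ = M * C ^ (N + 1) / N ! * (|u| ^ (N + 1) / (N + 1)) := by
          have hM0 : 0 ≤ M := le_trans (norm_nonneg _) (hM 0 Set.left_mem_uIcc)
          rw [abs_of_nonneg (by positivity)]
      _ = M * (C ^ (N + 1) * |u| ^ (N + 1) / (N + 1)!) := by
          rw [Nat.factorial_succ, Nat.cast_mul]
          have h1 : ((N ! : ℝ)) ≠ 0 := by positivity
          have h2 : ((N : ℝ) + 1) ≠ 0 := by positivity
          field_simp
          push_cast
          ring

end DysonPhillipsAux

open DysonPhillipsAux in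
/-- Norm-convergent Dyson–Phillips series: `Σ_{n≥0} iⁿ I_n(t)` has sum
`exp(itH) exp(-itH₀)` where `H = H₀ + V`; equivalently
`exp(itH) = (Σ_n iⁿ I_n(t)) exp(itH₀)`. -/
theorem dyson_phillips_series
    {n : Type*} [Fintype n] [DecidableEq n]
    (H₀ V : Matrix n n ℂ) (t : ℝ) :
    HasSum (fun m : ℕ => (Complex.I ^ m) • dysonIter H₀ V m t)
      (NormedSpace.exp ((Complex.I * (t : ℂ)) • (H₀ + V)) *
        NormedSpace.exp ((-(Complex.I * (t : ℂ))) • H₀)) ∧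
    NormedSpace.exp ((Complex.I * (t : ℂ)) • (H₀ + V)) =
      (∑' m : ℕ, (Complex.I ^ m) • dysonIter H₀ V m t) *
        NormedSpace.exp ((Complex.I * (t : ℂ)) • H₀) := by
  classical
  obtain ⟨C, hC⟩ := (isCompact_uIcc (a := (0:ℝ)) (b := t)).exists_bound_of_continuousOn
    (continuous_tau H₀ V).continuousOn
  obtain ⟨M, hM⟩ := (isCompact_uIcc (a := (0:ℝ)) (b := t)).exists_bound_of_continuousOn
    (continuous_W H₀ V).continuousOn
  -- summability of the Dyson series via iterated bounds
  have hIb : ∀ m, ‖(Complex.I ^ m) • dysonIter H₀ V m t‖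
      ≤ ‖(1 : Matrix n n ℂ)‖ * ((C * |t|) ^ m / m !) := by
    have hb := key_bound (f := fun N u => (Complex.I ^ N) • dysonIter H₀ V N u)
      (τ := interactionPicture H₀ V) (t := t) (M := ‖(1 : Matrix n n ℂ)‖) (C := C)
      (continuous_tau H₀ V)
      (fun N => (continuous_dysonIter H₀ V N).const_smul (Complex.I ^ N))
      (fun N u => by
        show (Complex.I ^ (N + 1)) • dysonIter H₀ V (N + 1) u
          = ∫ s in (0:ℝ)..u,
              Complex.I • ((Complex.I ^ N • dysonIter H₀ V N s) * interactionPicture H₀ V s)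
        rw [show dysonIter H₀ V (N + 1) u
            = ∫ s in (0:ℝ)..u, dysonIter H₀ V N s * interactionPicture H₀ V s from rfl,
          ← intervalIntegral.integral_smul]
        congr 1
        funext s
        rw [smul_mul_assoc, smul_smul]
        congr 1
        ring)
      (fun u _ => by simp [dysonIter]) hC
    intro m
    have h := hb m t Set.right_mem_uIcc
    calc ‖(Complex.I ^ m) • dysonIter H₀ V m t‖
        ≤ ‖(1 : Matrix n n ℂ)‖ * (C ^ m * |t| ^ m / m !) := h
      _ = ‖(1 : Matrix n n ℂ)‖ * ((C * |t|) ^ m / m !) := by rw [mul_pow]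
  have hsum : Summable (fun m : ℕ => (Complex.I ^ m) • dysonIter H₀ V m t) :=
    Summable.of_norm_bounded
      ((Real.summable_pow_div_factorial (C * |t|)).mul_left ‖(1 : Matrix n n ℂ)‖) hIb
  -- the remainder bound
  have hDrec : ∀ (N : ℕ) (u : ℝ), Wfun H₀ V u - P H₀ V (N + 1) u
      = ∫ s in (0:ℝ)..u,
          Complex.I • ((Wfun H₀ V s - P H₀ V N s) * interactionPicture H₀ V s) := by
    intro N u
    rw [W_eq H₀ V u, P_succ H₀ V N u, add_sub_add_left_eq_sub,
      ← intervalIntegral.integral_sub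
        (f := fun s => Complex.I • (Wfun H₀ V s * interactionPicture H₀ V s))
        (g := fun s => Complex.I • (P H₀ V N s * interactionPicture H₀ V s))
        ((((continuous_W H₀ V).mul (continuous_tau H₀ V)).const_smul
          Complex.I).intervalIntegrable _ _)
        ((((continuous_P H₀ V N).mul (continuous_tau H₀ V)).const_smul
          Complex.I).intervalIntegrable _ _)]
    congr 1
    funext s
    rw [← smul_sub, ← sub_mul]
  have hDb := key_bound (f := fun N u => Wfun H₀ V u - P H₀ V N u)
    (τ := interactionPicture H₀ V) (t := t) (M := M) (C := C)
    (continuous_tau H₀ V)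
    (fun N => (continuous_W H₀ V).sub (continuous_P H₀ V N))
    hDrec
    (fun u hu => by simpa [P] using hM u hu) hC
  have htend0 : Tendsto (fun N : ℕ => ‖Wfun H₀ V t - P H₀ V N t‖) atTop (𝓝 0) := by
    have hg : Tendsto (fun N : ℕ => M * ((C * |t|) ^ N / N !)) atTop (𝓝 0) := by
      simpa using (FloorSemiring.tendsto_pow_div_factorial_atTop (C * |t|)).const_mul M
    refine squeeze_zero (fun N => norm_nonneg _) (fun N => ?_) hg
    calc ‖Wfun H₀ V t - P H₀ V N t‖ ≤ M * (C ^ N * |t| ^ N / N !) :=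
          hDb N t Set.right_mem_uIcc
      _ = M * ((C * |t|) ^ N / N !) := by rw [mul_pow]
  have hPt : Tendsto (fun N => P H₀ V N t) atTop (𝓝 (Wfun H₀ V t)) := by
    rw [tendsto_iff_norm_sub_tendsto_zero]
    simpa [norm_sub_rev] using htend0
  have hhs := hsum.hasSum
  have hPt' : Tendsto (fun N => P H₀ V N t) atTop
      (𝓝 (∑' m : ℕ, (Complex.I ^ m) • dysonIter H₀ V m t)) := hhs.tendsto_sum_nat
  have hkey : (∑' m : ℕ, (Complex.I ^ m) • dysonIter H₀ V m t) = Wfun H₀ V t :=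
    tendsto_nhds_unique hPt' hPt
  constructor
  · have h := hhs
    rw [hkey] at h
    exact h
  · rw [hkey]
    show NormedSpace.exp ((Complex.I * (t : ℂ)) • (H₀ + V))
        = (NormedSpace.exp ((Complex.I * (t : ℂ)) • (H₀ + V)) *
            NormedSpace.exp ((-(Complex.I * (t : ℂ))) • H₀)) *
          NormedSpace.exp ((Complex.I * (t : ℂ)) • H₀)
    rw [mul_assoc, exp_neg_mul_exp_smul H₀ (Complex.I * (t : ℂ)), mul_one]
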